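/- Let P be a fine saturated monoid, λ ∈ P, and suppose the homomorphism ϑ: N → P, 1 ↦ λ, is saturated, and that −λ ∉ P and for every t ∈ P there is n ∈ N with t − nλ ∉ P (inside P^gp). Let Λ = P/⟨λ⟩ be the quotient monoid with projection q: P → Λ. Then: (i) Λ is saturated; (ii) for every x ∈ Λ, the fiber q^{-1}(x) has a unique minimal element x̃ for the preorder of P; (iii) for every x ∈ Λ and n ≥ 0, the minimal lift of nx equals n·x̃. -/

import Mathlib

/-!
STATEMENT 10.  Let `P` be a fine saturated monoid (written additively), `λ ∈ P`, and
suppose that the homomorphism `ϑ : ℕ → P`, `1 ↦ λ`, is saturated, that `-λ ∉ P` and that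
for every `t ∈ P` there is `n ∈ ℕ` with `t - n·λ ∉ P` (inside `P^gp`).  Let `Λ = P/⟨λ⟩`
be the quotient monoid with projection `q : P → Λ`.  Then :
(i)   `Λ` is saturated (in particular integral);
(ii)  every fiber `q⁻¹(x)` has a unique minimal element `x̃` for the preorder of `P`;
(iii) for every `x ∈ Λ` and `n ≥ 0`, the minimal lift of `n•x` is `n•x̃`.

Conventions : `P` integral = cancellative (`AddCancelCommMonoid`), `P` fine = integral
and finitely generated; saturatedness of `P` and of `Λ`, the saturatedness of `ϑ`, and
the conditions `-λ ∉ P`, `t - n·λ ∉ P` are all expressed elementwise (via the embedding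
into the group envelope).  The quotient `Λ` is realized as the quotient by the additive
congruence `x ∼ y ⇔ ∃ a b, x + a•λ = y + b•λ`.
-/

/-- The additive congruence on `P` defining the quotient monoid `Λ = P/⟨λ⟩`. -/
def lamCon (P : Type*) [AddCancelCommMonoid P] (lam : P) : AddCon P where
  r x y := ∃ a b : ℕ, x + a • lam = y + b • lam
  iseqv := by
    refine ⟨fun x => ⟨0, 0, rfl⟩, ?_, ?_⟩
    · rintro x y ⟨a, b, h⟩; exact ⟨b, a, h.symm⟩
    · rintro x y z ⟨a, b, h1⟩ ⟨c, d, h2⟩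
      refine ⟨a + c, d + b, ?_⟩
      have := congrArg (· + c • lam) h1
      try simp only at this
      calc x + (a + c) • lam = x + a • lam + c • lam := by rw [add_nsmul, add_assoc]
        _ = y + c • lam + b • lam := by rw [this]; abel
        _ = z + d • lam + b • lam := by rw [h2]
        _ = z + (d + b) • lam := by rw [add_nsmul, add_assoc]
  add' := by
    rintro w x y z ⟨a, b, h1⟩ ⟨c, d, h2⟩
    refine ⟨a + c, b + d, ?_⟩
    calc w + y + (a + c) • lam = (w + a • lam) + (y + c • lam) := by
          rw [add_nsmul]; abel
      _ = (x + b • lam) + (z + d • lam) := by rw [h1, h2]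
      _ = x + z + (b + d) • lam := by rw [add_nsmul]; abel


section Aux
variable {P : Type*} [AddCancelCommMonoid P] {lam : P}

lemma lamCon_mk'_eq {x y : P} :
    AddCon.mk' (lamCon P lam) x = AddCon.mk' (lamCon P lam) y ↔
      ∃ a b : ℕ, x + a • lam = y + b • lam :=
  AddCon.eq _

/-- If `m` is not `≥ λ`, then any `y` congruent to `m` is `≥ m`. -/
lemma lamCon_min_of_rel {m y : P} (hm : ¬ ∃ v, m = lam + v)
    (h : ∃ a b : ℕ, y + a • lam = m + b • lam) : ∃ w, y = m + w := by
  obtain ⟨a, b, h⟩ := h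
  rcases le_or_gt a b with hab | hab
  · refine ⟨(b - a) • lam, ?_⟩
    have h2 : y + a • lam = m + (b - a) • lam + a • lam := by
      rw [add_assoc, ← add_nsmul, Nat.sub_add_cancel hab, h]
    exact add_right_cancel h2
  · exfalso
    have h2 : m + b • lam = y + (a - b) • lam + b • lam := by
      rw [add_assoc, ← add_nsmul, Nat.sub_add_cancel hab.le, ← h]
    have h3 : m = y + (a - b) • lam := add_right_cancel h2
    obtain ⟨c, hc⟩ : ∃ c, a - b = c + 1 :=
      ⟨a - b - 1, (Nat.succ_pred_eq_of_pos (Nat.sub_pos_of_lt hab)).symm⟩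
    exact hm ⟨y + c • lam, by rw [h3, hc, succ_nsmul]; abel⟩

lemma lamCon_min_no_lam (hneg : ¬ ∃ w : P, lam + w = 0) {m : P}
    {x : (lamCon P lam).Quotient} (hx : AddCon.mk' (lamCon P lam) m = x)
    (hmin : ∀ y : P, AddCon.mk' (lamCon P lam) y = x → ∃ w, y = m + w) :
    ¬ ∃ v, m = lam + v := by
  rintro ⟨v, hv⟩
  have hvx : AddCon.mk' (lamCon P lam) v = x := by
    rw [← hx]
    exact lamCon_mk'_eq.2 ⟨1, 0, by simp [one_nsmul, hv]; abel⟩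
  obtain ⟨w, hw⟩ := hmin v hvx
  refine hneg ⟨w, ?_⟩
  have h2 : m + (lam + w) = m + 0 := by rw [add_zero]; nth_rewrite 2 [hv]; rw [hw]; abel
  exact add_left_cancel h2

lemma lamCon_exists_max (lam : P)
    (hfin : ∀ t : P, ∃ k : ℕ, ¬ ∃ w : P, t = k • lam + w) (p : P) :
    ∃ n : ℕ, (∃ w, p = n • lam + w) ∧ ¬ ∃ w, p = (n + 1) • lam + w := by
  by_contra hc
  push_neg at hc
  obtain ⟨k, hk⟩ := hfin p
  refine hk ?_
  clear hk
  induction k with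
  | zero => exact ⟨p, by simp⟩
  | succ n ih => exact hc n ih

end Aux

theorem statement10 (P : Type*) [AddCancelCommMonoid P]
    -- `P` is fine : integral (cancellative) and finitely generated ...
    [AddMonoid.FG P]
    -- ... and saturated
    (hPsat : ∀ u v : P, ∀ k : ℕ, 1 ≤ k → (∃ w, k • u = k • v + w) → ∃ t, u = v + t)
    (lam : P)
    -- `ϑ : ℕ → P`, `1 ↦ λ`, is saturated (Tsuji's elementwise criterion)
    (hϑsat : ∀ (x : P) (k m : ℕ), 1 ≤ k → (∃ w, k • x = m • lam + w) →
      ∃ m' : ℕ, (∃ w', x = m' • lam + w') ∧ m ≤ k * m')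
    -- `-λ ∉ P`
    (hneg : ¬ ∃ w : P, lam + w = 0)
    -- for every `t ∈ P` there is `n` with `t - n·λ ∉ P`
    (hfin : ∀ t : P, ∃ k : ℕ, ¬ ∃ w : P, t = k • lam + w) :
    -- (i) `Λ` is integral and saturated
    ((∀ a b c : (lamCon P lam).Quotient, a + c = b + c → a = b) ∧
     (∀ u v : (lamCon P lam).Quotient, ∀ k : ℕ, 1 ≤ k →
        (∃ w, k • u = k • v + w) → ∃ t, u = v + t)) ∧
    -- (ii) each fiber of `q : P → Λ` has a unique minimal element
    (∀ x : (lamCon P lam).Quotient, ∃! m : P,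
      AddCon.mk' _ m = x ∧ ∀ y : P, AddCon.mk' _ y = x → ∃ w, y = m + w) ∧
    -- (iii) minimal lifts are compatible with multiplication by `n ∈ ℕ`
    (∀ (x : (lamCon P lam).Quotient) (k : ℕ) (m : P),
      (AddCon.mk' _ m = x ∧ ∀ y : P, AddCon.mk' _ y = x → ∃ w, y = m + w) →
      (AddCon.mk' (lamCon P lam) (k • m) = k • x ∧
        ∀ y : P, AddCon.mk' _ y = k • x → ∃ w, y = k • m + w)) := by
  classical
  have hmk : ∀ x : (lamCon P lam).Quotient, ∃ p : P, AddCon.mk' (lamCon P lam) p = x :=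
    AddCon.mk'_surjective
  refine ⟨⟨?_, ?_⟩, ?_, ?_⟩
  · -- integrality
    intro a b c h
    obtain ⟨p, rfl⟩ := hmk a
    obtain ⟨q, rfl⟩ := hmk b
    obtain ⟨r, rfl⟩ := hmk c
    rw [← map_add, ← map_add] at h
    obtain ⟨a, b, h⟩ := lamCon_mk'_eq.1 h
    refine lamCon_mk'_eq.2 ⟨a, b, ?_⟩
    have h2 : p + a • lam + r = q + b • lam + r := by
      rw [show p + a • lam + r = p + r + a • lam by abel,
        show q + b • lam + r = q + r + b • lam by abel, h]
    exact add_right_cancel h2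
  · -- saturatedness of Λ
    intro u v k hk hw
    obtain ⟨p, rfl⟩ := hmk u
    obtain ⟨q, rfl⟩ := hmk v
    obtain ⟨w, hw⟩ := hw
    obtain ⟨r, rfl⟩ := hmk w
    rw [← map_nsmul, ← map_nsmul, ← map_add] at hw
    obtain ⟨a, b, hab⟩ := lamCon_mk'_eq.1 hw
    have hle : a ≤ k * a := Nat.le_mul_of_pos_left a hk
    obtain ⟨c, hc⟩ := Nat.exists_eq_add_of_le hle
    have key : k • (p + a • lam) = k • q + (r + (b + c) • lam) := by
      rw [smul_add, smul_smul, hc, add_nsmul, add_nsmul]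
      rw [show k • p + (a • lam + c • lam) = (k • p + a • lam) + c • lam by abel, hab]
      abel
    obtain ⟨t, ht⟩ := hPsat (p + a • lam) q k hk ⟨r + (b + c) • lam, key⟩
    refine ⟨AddCon.mk' (lamCon P lam) t, ?_⟩
    rw [← map_add, lamCon_mk'_eq]
    exact ⟨a, 0, by rw [zero_smul, add_zero]; exact ht⟩
  · -- (ii) unique minimal element in each fiber
    intro x
    obtain ⟨p, rfl⟩ := hmk x
    obtain ⟨n, ⟨m, hm⟩, hmax⟩ := lamCon_exists_max lam hfin p
    have hnolam : ¬ ∃ v, m = lam + v := by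
      rintro ⟨v, hv⟩
      exact hmax ⟨v, by rw [hm, hv, succ_nsmul]; abel⟩
    have hmx : AddCon.mk' (lamCon P lam) m = AddCon.mk' (lamCon P lam) p :=
      lamCon_mk'_eq.2 ⟨n, 0, by rw [zero_smul, add_zero, hm]; abel⟩
    refine ⟨m, ⟨hmx, fun y hy => lamCon_min_of_rel hnolam (lamCon_mk'_eq.1 (hy.trans hmx.symm))⟩, ?_⟩
    rintro m' ⟨hm'x, hmin'⟩
    obtain ⟨w, hw⟩ := lamCon_min_of_rel hnolam (lamCon_mk'_eq.1 (hm'x.trans hmx.symm))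
    -- hw : m' = m + w; now show w = 0
    have hnolam' : ¬ ∃ v, m' = lam + v := lamCon_min_no_lam hneg hm'x hmin'
    obtain ⟨a, b, hab⟩ := lamCon_mk'_eq.1 (hmx.symm ▸ hm'x : AddCon.mk' (lamCon P lam) m' = AddCon.mk' (lamCon P lam) m)
    -- m' + a•lam = m + b•lam, m' = m + w ⇒ w + a•lam = b•lam
    have h2 : m + (w + a • lam) = m + b • lam := by
      rw [show m + (w + a • lam) = (m + w) + a • lam by abel, ← hw, hab]
    have h3 : w + a • lam = b • lam := add_left_cancel h2
    rcases lt_trichotomy a b with hab' | hab' | hab'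
    · exfalso
      obtain ⟨c, hc⟩ : ∃ c, b - a = c + 1 :=
        ⟨b - a - 1, (Nat.succ_pred_eq_of_pos (Nat.sub_pos_of_lt hab')).symm⟩
      have h4 : w + a • lam = (b - a) • lam + a • lam := by
        rw [← add_nsmul, Nat.sub_add_cancel hab'.le, h3]
      have h5 : w = (b - a) • lam := add_right_cancel h4
      exact hnolam' ⟨m + c • lam, by rw [hw, h5, hc, succ_nsmul]; abel⟩
    · subst hab'
      have h5 : w = 0 := by
        have := add_right_cancel (h3.trans (zero_add (a • lam)).symm)
        exact this
      rw [hw, h5, add_zero]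
    · exfalso
      obtain ⟨c, hc⟩ : ∃ c, a - b = c + 1 :=
        ⟨a - b - 1, (Nat.succ_pred_eq_of_pos (Nat.sub_pos_of_lt hab')).symm⟩
      have h4 : (w + (a - b) • lam) + b • lam = b • lam := by
        rw [add_assoc, ← add_nsmul, Nat.sub_add_cancel hab'.le, h3]
      have h5 : w + (a - b) • lam = 0 := by
        have := add_right_cancel (h4.trans (zero_add (b • lam)).symm)
        exact this
      rw [hc, succ_nsmul] at h5
      exact hneg ⟨w + c • lam, by rw [← h5]; abel⟩
  · -- (iii)
    rintro x k m ⟨hmx, hmin⟩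
    have hnolam : ¬ ∃ v, m = lam + v := lamCon_min_no_lam hneg hmx hmin
    have hkx : AddCon.mk' (lamCon P lam) (k • m) = k • x := by rw [map_nsmul, hmx]
    refine ⟨hkx, fun y hy => ?_⟩
    rcases Nat.eq_zero_or_pos k with rfl | hk
    · exact ⟨y, by rw [zero_smul, zero_add]⟩
    refine lamCon_min_of_rel ?_ (lamCon_mk'_eq.1 (hy.trans hkx.symm))
    rintro ⟨v, hv⟩
    obtain ⟨m', ⟨w', hw'⟩, hle⟩ := hϑsat m k 1 hk ⟨v, by rw [one_nsmul, hv]⟩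
    have hm' : 1 ≤ m' := by
      rcases Nat.eq_zero_or_pos m' with rfl | h
      · simp at hle
      · exact h
    obtain ⟨c, hc⟩ : ∃ c, m' = c + 1 := ⟨m' - 1, (Nat.succ_pred_eq_of_pos hm').symm⟩
    exact hnolam ⟨c • lam + w', by rw [hw', hc, succ_nsmul]; abel⟩
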